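/- Let γ > 0, μ > 0, let φ : [0, T] → ℓ² be a solution of the cubic DNLS equation and ψ : [0, T] → ℓ² a solution of the AL lattice, and set y(t) = φ(t) − ψ(t). Then for every t ∈ [0, T], the function t ↦ ‖y(t)‖_{ℓ²}² is differentiable and its derivative satisfies d/dt ‖y(t)‖_{ℓ²}² ≤ 2 ( 4μ ‖ψ(t)‖_{ℓ²}³ + 2γ ‖φ(t)‖_{ℓ²}³ ) ‖y(t)‖_{ℓ²}. -/

import Mathlib

open Set
open scoped ENNReal

noncomputable section

/-- The Hilbert space ℓ² of square-summable sequences of complex numbers indexed by ℤ. -/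
abbrev l2 : Type := lp (fun _ : ℤ => ℂ) 2

/-- `φ : I → ℓ²` is a solution of the cubic DNLS equation
`i φ̇ₙ + (φₙ₊₁ + φₙ₋₁) + γ|φₙ|²φₙ = 0` on the set `s`, with derivative curve `φ'`:
it is continuously differentiable and satisfies the equation componentwise. -/
def IsDNLSSol (γ : ℝ) (s : Set ℝ) (φ φ' : ℝ → l2) : Prop :=
  (∀ t ∈ s, HasDerivWithinAt φ (φ' t) s t) ∧ ContinuousOn φ' s ∧
    ∀ t ∈ s, ∀ n : ℤ,
      Complex.I * (φ' t) n + ((φ t) (n + 1) + (φ t) (n - 1))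
        + (γ * ‖(φ t) n‖ ^ 2 : ℝ) * (φ t) n = 0

/-- `ψ : I → ℓ²` is a solution of the Ablowitz–Ladik lattice
`i ψ̇ₙ + (ψₙ₊₁ + ψₙ₋₁) + μ|ψₙ|²(ψₙ₊₁ + ψₙ₋₁) = 0` on the set `s`, with derivative curve `ψ'`:
it is continuously differentiable and satisfies the equation componentwise. -/
def IsALSol (μ : ℝ) (s : Set ℝ) (ψ ψ' : ℝ → l2) : Prop :=
  (∀ t ∈ s, HasDerivWithinAt ψ (ψ' t) s t) ∧ ContinuousOn ψ' s ∧
    ∀ t ∈ s, ∀ n : ℤ,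
      Complex.I * (ψ' t) n + ((ψ t) (n + 1) + (ψ t) (n - 1))
        + (μ * ‖(ψ t) n‖ ^ 2 : ℝ) * ((ψ t) (n + 1) + (ψ t) (n - 1)) = 0

set_option maxHeartbeats 1000000

lemma two_toReal : ((2:ℝ≥0∞).toReal) = 2 := by norm_num

lemma l2_summable_sq (x : l2) : Summable (fun n : ℤ => ‖x n‖ ^ 2) := by
  have h2 := (memℓp_gen_iff (by norm_num : 0 < (2:ℝ≥0∞).toReal)).1 (lp.memℓp x)
  simpa [two_toReal, Real.rpow_natCast] using h2

lemma memℓp_of_sq (f : ℤ → ℂ) (h : Summable fun n => ‖f n‖ ^ 2) : Memℓp f 2 := by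
  apply memℓp_gen
  simpa [two_toReal, Real.rpow_natCast] using h

lemma l2_norm_sq_eq (f : l2) : ‖f‖ ^ 2 = ∑' n : ℤ, ‖f n‖ ^ 2 := by
  have := lp.norm_rpow_eq_tsum (by norm_num : 0 < (2:ℝ≥0∞).toReal) f
  simpa [two_toReal, Real.rpow_natCast] using this

lemma l2_norm_le {f : l2} {C : ℝ} (hC : 0 ≤ C) (h : ∑' n : ℤ, ‖f n‖ ^ 2 ≤ C ^ 2) :
    ‖f‖ ≤ C := by
  apply lp.norm_le_of_tsum_le (by norm_num : 0 < (2:ℝ≥0∞).toReal) hC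
  simpa [two_toReal, Real.rpow_natCast] using h

/-- Shift operator on ℓ². -/
def shiftl (k : ℤ) (x : l2) : l2 :=
  ⟨fun n => x (n + k), memℓp_of_sq _ (by
    have := l2_summable_sq x
    exact ((Equiv.addRight k).summable_iff (f := fun n : ℤ => ‖x n‖ ^ 2)).2 this)⟩

@[simp] lemma shiftl_apply (k : ℤ) (x : l2) (n : ℤ) : (shiftl k x) n = x (n + k) := rfl

lemma norm_shiftl_le (k : ℤ) (x : l2) : ‖shiftl k x‖ ≤ ‖x‖ := by
  apply l2_norm_le (norm_nonneg x)
  rw [l2_norm_sq_eq]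
  have : ∑' n : ℤ, ‖(shiftl k x) n‖ ^ 2 = ∑' n : ℤ, ‖x n‖ ^ 2 :=
    (Equiv.addRight k).tsum_eq (fun n : ℤ => ‖x n‖ ^ 2)
  exact this.le

/-- Multiplication by a bounded sequence. -/
def mull (u : ℤ → ℂ) (C : ℝ) (hu : ∀ n, ‖u n‖ ≤ C) (x : l2) : l2 :=
  ⟨fun n => u n * x n, memℓp_of_sq _ (by
    have hC : 0 ≤ C := le_trans (norm_nonneg _) (hu 0)
    apply Summable.of_nonneg_of_le (fun n => by positivity)
      (fun n => ?_) ((l2_summable_sq x).mul_left (C ^ 2))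
    calc ‖u n * x n‖ ^ 2 = ‖u n‖ ^ 2 * ‖x n‖ ^ 2 := by rw [norm_mul]; ring
    _ ≤ C ^ 2 * ‖x n‖ ^ 2 :=
        mul_le_mul_of_nonneg_right (pow_le_pow_left₀ (norm_nonneg _) (hu n) 2)
          (by positivity))⟩

@[simp] lemma mull_apply (u : ℤ → ℂ) (C : ℝ) (hu : ∀ n, ‖u n‖ ≤ C) (x : l2) (n : ℤ) :
    (mull u C hu x) n = u n * x n := rfl

lemma norm_mull_le (u : ℤ → ℂ) (C : ℝ) (hu : ∀ n, ‖u n‖ ≤ C) (x : l2) :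
    ‖mull u C hu x‖ ≤ C * ‖x‖ := by
  have hC : 0 ≤ C := le_trans (norm_nonneg _) (hu 0)
  apply l2_norm_le (by positivity)
  have h1 : ∑' n : ℤ, ‖(mull u C hu x) n‖ ^ 2 ≤ ∑' n : ℤ, C ^ 2 * ‖x n‖ ^ 2 := by
    apply Summable.tsum_le_tsum _ _ ((l2_summable_sq x).mul_left (C ^ 2))
    · intro n
      calc ‖(mull u C hu x) n‖ ^ 2 = ‖u n‖ ^ 2 * ‖x n‖ ^ 2 := by
            rw [mull_apply, norm_mul]; ring
      _ ≤ C ^ 2 * ‖x n‖ ^ 2 :=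
          mul_le_mul_of_nonneg_right (pow_le_pow_left₀ (norm_nonneg _) (hu n) 2)
            (by positivity)
    · exact (l2_summable_sq _)
  calc ∑' n : ℤ, ‖(mull u C hu x) n‖ ^ 2 ≤ C ^ 2 * ∑' n : ℤ, ‖x n‖ ^ 2 := by
        rw [← tsum_mul_left] at *; exact h1
  _ = (C * ‖x‖) ^ 2 := by rw [← l2_norm_sq_eq]; ring

open Complex in
lemma l2_inner_eq (f g : l2) :
    (inner ℂ f g : ℂ) = ∑' n : ℤ, (starRingEnd ℂ) (f n) * g n := by
  rw [lp.inner_eq_tsum]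
  congr 1; funext n; rw [RCLike.inner_apply]; ring

open Complex in
lemma inner_shift_conj (y : l2) :
    (inner ℂ y (shiftl (-1) y) : ℂ) = (starRingEnd ℂ) (inner ℂ y (shiftl 1 y) : ℂ) := by
  rw [l2_inner_eq, l2_inner_eq]
  simp only [starRingEnd_apply]
  rw [tsum_star]
  have h1 : ∀ n : ℤ, star ((starRingEnd ℂ) (y n) * (shiftl 1 y) n)
      = (starRingEnd ℂ) (y (n + 1)) * y n := by
    intro n
    simp [shiftl_apply, star_mul', mul_comm]
  calc ∑' n : ℤ, (starRingEnd ℂ) (y n) * (shiftl (-1) y) n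
      = ∑' n : ℤ, (starRingEnd ℂ) (y (n + 1)) * y n := by
        refine ((Equiv.addRight (1:ℤ)).tsum_eq
          (fun n : ℤ => (starRingEnd ℂ) (y n) * (shiftl (-1) y) n)).symm.trans ?_
        congr 1
        funext n
        simp [shiftl_apply]
    _ = ∑' n : ℤ, star ((starRingEnd ℂ) (y n) * (shiftl 1 y) n) := by
        congr 1; funext n; rw [h1]

lemma re_I_mul_shifts (y : l2) :
    (Complex.I * ((inner ℂ y (shiftl 1 y) : ℂ) + (inner ℂ y (shiftl (-1) y) : ℂ))).re = 0 := by
  rw [inner_shift_conj]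
  set z := (inner ℂ y (shiftl 1 y) : ℂ)
  simp [Complex.mul_re, Complex.add_im, Complex.add_re]

/-- For a DNLS solution `φ` and an AL solution `ψ` on `[0, T]`, with `y = φ − ψ`, the map
`t ↦ ‖y(t)‖²` is differentiable and its derivative satisfies
`d/dt ‖y(t)‖² ≤ 2(4μ‖ψ(t)‖³ + 2γ‖φ(t)‖³)‖y(t)‖`. -/
theorem deriv_sq_dist_bound (γ μ T : ℝ) (hγ : 0 < γ) (hμ : 0 < μ) (hT : 0 < T)
    (φ φ' ψ ψ' : ℝ → l2)
    (hφ : IsDNLSSol γ (Icc 0 T) φ φ') (hψ : IsALSol μ (Icc 0 T) ψ ψ') :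
    ∀ t ∈ Icc (0 : ℝ) T,
      DifferentiableWithinAt ℝ (fun s => ‖φ s - ψ s‖ ^ 2) (Icc 0 T) t ∧
      derivWithin (fun s => ‖φ s - ψ s‖ ^ 2) (Icc 0 T) t ≤
        2 * (4 * μ * ‖ψ t‖ ^ 3 + 2 * γ * ‖φ t‖ ^ 3) * ‖φ t - ψ t‖ := by
  obtain ⟨hφd, _, hφe⟩ := hφ
  obtain ⟨hψd, _, hψe⟩ := hψ
  intro t ht
  set a : l2 := φ t with ha
  set b : l2 := ψ t with hb
  set y : l2 := a - b with hy
  set y' : l2 := φ' t - ψ' t with hy'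
  have hyd : HasDerivWithinAt (fun s => φ s - ψ s) y' (Icc 0 T) t :=
    (hφd t ht).sub (hψd t ht)
  have hinner := hyd.inner ℂ hyd
  have hre : HasDerivWithinAt (fun s => ‖φ s - ψ s‖ ^ 2)
      (2 * (inner ℂ y y' : ℂ).re) (Icc 0 T) t := by
    have h2 := Complex.reCLM.hasFDerivAt.comp_hasDerivWithinAt t hinner
    have hfun : (⇑Complex.reCLM ∘ fun s => (inner ℂ (φ s - ψ s) (φ s - ψ s) : ℂ))
        = fun s => ‖φ s - ψ s‖ ^ 2 := by
      funext s
      have h3 := inner_self_eq_norm_sq (𝕜 := ℂ) (E := l2) (φ s - ψ s)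
      simp only [Function.comp_apply, Complex.reCLM_apply]
      simpa only [RCLike.re_to_complex] using h3
    rw [hfun] at h2
    refine h2.congr_deriv ?_
    have hc : (inner ℂ y' y : ℂ) = (starRingEnd ℂ) (inner ℂ y y' : ℂ) :=
      (inner_conj_symm y' y).symm
    rw [Complex.reCLM_apply, Complex.add_re, hc, Complex.conj_re]
    ring
  have hud : UniqueDiffWithinAt ℝ (Icc (0:ℝ) T) t := (uniqueDiffOn_Icc hT) t ht
  refine ⟨hre.differentiableWithinAt, ?_⟩
  rw [hre.derivWithin hud]
  -- build the decomposition of y'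
  have hbdu : ∀ n : ℤ, ‖((γ * ‖a n‖ ^ 2 : ℝ) : ℂ)‖ ≤ γ * ‖a‖ ^ 2 := by
    intro n
    rw [Complex.norm_real, Real.norm_eq_abs]
    have h1 : ‖a n‖ ≤ ‖a‖ := lp.norm_apply_le_norm (by norm_num) a n
    have h2 : (0:ℝ) ≤ ‖a n‖ := norm_nonneg _
    rw [abs_of_nonneg (by positivity)]
    exact mul_le_mul_of_nonneg_left (pow_le_pow_left₀ h2 h1 2) hγ.le
  have hbdv : ∀ n : ℤ, ‖((μ * ‖b n‖ ^ 2 : ℝ) : ℂ)‖ ≤ μ * ‖b‖ ^ 2 := by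
    intro n
    rw [Complex.norm_real, Real.norm_eq_abs]
    have h1 : ‖b n‖ ≤ ‖b‖ := lp.norm_apply_le_norm (by norm_num) b n
    have h2 : (0:ℝ) ≤ ‖b n‖ := norm_nonneg _
    rw [abs_of_nonneg (by positivity)]
    exact mul_le_mul_of_nonneg_left (pow_le_pow_left₀ h2 h1 2) hμ.le
  set Na : l2 := mull (fun n => ((γ * ‖a n‖ ^ 2 : ℝ) : ℂ)) (γ * ‖a‖ ^ 2) hbdu a with hNa
  set Sb : l2 := shiftl 1 b + shiftl (-1) b with hSb
  set Mb : l2 := mull (fun n => ((μ * ‖b n‖ ^ 2 : ℝ) : ℂ)) (μ * ‖b‖ ^ 2) hbdv Sb with hMb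
  have hcomp : y' = Complex.I • (shiftl 1 y + shiftl (-1) y) + Complex.I • (Na - Mb) := by
    apply lp.ext
    funext n
    have hφn := hφe t ht n
    have hψn := hψe t ht n
    have h1 : (φ' t) n
        = Complex.I * ((a (n + 1) + a (n - 1)) + ((γ * ‖a n‖ ^ 2 : ℝ) : ℂ) * a n) := by
      linear_combination (-Complex.I) * hφn + ((φ' t) n) * Complex.I_mul_I
    have h2 : (ψ' t) n
        = Complex.I * ((b (n + 1) + b (n - 1))
            + ((μ * ‖b n‖ ^ 2 : ℝ) : ℂ) * (b (n + 1) + b (n - 1))) := by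
      linear_combination (-Complex.I) * hψn + ((ψ' t) n) * Complex.I_mul_I
    have hm1 : n + (-1 : ℤ) = n - 1 := by ring
    simp only [hy', hNa, hMb, hSb, hy, lp.coeFn_sub, Pi.sub_apply, lp.coeFn_add, Pi.add_apply,
      lp.coeFn_smul, Pi.smul_apply, smul_eq_mul, mull_apply, shiftl_apply, hm1]
    rw [h1, h2]
    ring
  have hsplit : (inner ℂ y y' : ℂ)
      = Complex.I * ((inner ℂ y (shiftl 1 y) : ℂ) + (inner ℂ y (shiftl (-1) y) : ℂ))
        + Complex.I * (inner ℂ y (Na - Mb) : ℂ) := by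
    rw [hcomp, inner_add_right, inner_smul_right, inner_smul_right, inner_add_right]
  have hkey : (inner ℂ y y' : ℂ).re ≤ ‖y‖ * (γ * ‖a‖ ^ 3 + 2 * (μ * ‖b‖ ^ 3)) := by
    rw [hsplit, Complex.add_re, re_I_mul_shifts y, zero_add]
    have h1 : (Complex.I * (inner ℂ y (Na - Mb) : ℂ)).re ≤ ‖(inner ℂ y (Na - Mb) : ℂ)‖ := by
      rw [Complex.mul_re]
      simp only [Complex.I_re, Complex.I_im, zero_mul, one_mul, zero_sub]
      calc -(inner ℂ y (Na - Mb) : ℂ).im ≤ |(inner ℂ y (Na - Mb) : ℂ).im| := neg_le_abs _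
        _ ≤ ‖(inner ℂ y (Na - Mb) : ℂ)‖ := Complex.abs_im_le_norm _
        _ = ‖(inner ℂ y (Na - Mb) : ℂ)‖ := rfl
    have h2 : ‖(inner ℂ y (Na - Mb) : ℂ)‖ ≤ ‖y‖ * ‖Na - Mb‖ := norm_inner_le_norm _ _
    have h3 : ‖Na - Mb‖ ≤ γ * ‖a‖ ^ 3 + 2 * (μ * ‖b‖ ^ 3) := by
      have hSbn : ‖Sb‖ ≤ 2 * ‖b‖ := by
        calc ‖Sb‖ ≤ ‖shiftl 1 b‖ + ‖shiftl (-1) b‖ := norm_add_le _ _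
          _ ≤ ‖b‖ + ‖b‖ := add_le_add (norm_shiftl_le _ _) (norm_shiftl_le _ _)
          _ = 2 * ‖b‖ := by ring
      calc ‖Na - Mb‖ ≤ ‖Na‖ + ‖Mb‖ := norm_sub_le _ _
        _ ≤ (γ * ‖a‖ ^ 2) * ‖a‖ + (μ * ‖b‖ ^ 2) * ‖Sb‖ :=
            add_le_add (norm_mull_le _ _ _ _) (norm_mull_le _ _ _ _)
        _ ≤ (γ * ‖a‖ ^ 2) * ‖a‖ + (μ * ‖b‖ ^ 2) * (2 * ‖b‖) := by
            have : (0:ℝ) ≤ μ * ‖b‖ ^ 2 := by positivity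
            nlinarith
        _ = γ * ‖a‖ ^ 3 + 2 * (μ * ‖b‖ ^ 3) := by ring
    calc (Complex.I * (inner ℂ y (Na - Mb) : ℂ)).re ≤ ‖y‖ * ‖Na - Mb‖ := le_trans h1 h2
      _ ≤ ‖y‖ * (γ * ‖a‖ ^ 3 + 2 * (μ * ‖b‖ ^ 3)) :=
          mul_le_mul_of_nonneg_left h3 (norm_nonneg _)
  have hyn : (0:ℝ) ≤ ‖y‖ := norm_nonneg _
  have han : (0:ℝ) ≤ ‖a‖ := norm_nonneg _
  have hbn : (0:ℝ) ≤ ‖b‖ := norm_nonneg _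
  nlinarith [hkey, mul_nonneg (mul_nonneg hγ.le hyn) (pow_nonneg han 3),
    mul_nonneg (mul_nonneg hμ.le hyn) (pow_nonneg hbn 3)]
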